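/- For all integers r, n with 1 ≤ r < n, every r×n Latin rectangle can be extended, by adjoining n−r further rows, to a Latin square of order n. -/

import Mathlib

open Finset

lemma latin_exists_new_row (r n : ℕ) (hrn : r < n)
    (A : Fin r → Fin n → Fin n)
    (hrow : ∀ i, Function.Injective (A i))
    (hcol : ∀ j, Function.Injective (fun i : Fin r => A i j)) :
    ∃ f : Fin n → Fin n, Function.Injective f ∧ ∀ j i, f j ≠ A i j := by
  classical
  have hn : 0 < n := lt_of_le_of_lt (Nat.zero_le r) hrn
  set t : Fin n → Finset (Fin n) :=
    fun j => Finset.univ \ Finset.image (fun i => A i j) Finset.univ with ht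
  have htcard : ∀ j, (t j).card = n - r := by
    intro j
    rw [ht]
    rw [Finset.card_sdiff_of_subset (Finset.subset_univ _),
      Finset.card_image_of_injective _ (hcol j)]
    simp
  -- each symbol s belongs to t j for exactly n - r columns j
  have hsym : ∀ s : Fin n, (Finset.univ.filter (fun j => s ∈ t j)).card = n - r := by
    intro s
    have hbij : ∀ i : Fin r, Function.Bijective (A i) :=
      fun i => Finite.injective_iff_bijective.mp (hrow i)
    set g : Fin r → Fin n := fun i => (Equiv.ofBijective (A i) (hbij i)).symm s with hg
    have hgs : ∀ i, A i (g i) = s := fun i =>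
      (Equiv.ofBijective (A i) (hbij i)).apply_symm_apply s
    have hginj : Function.Injective g := by
      intro i1 i2 h
      apply hcol (g i1)
      show A i1 (g i1) = A i2 (g i1)
      rw [hgs i1, h, hgs i2]
    have himg : Finset.univ.filter (fun j => ∃ i, A i j = s)
        = Finset.image g Finset.univ := by
      ext j
      simp only [Finset.mem_filter, Finset.mem_univ, true_and, Finset.mem_image]
      constructor
      · rintro ⟨i, hi⟩
        exact ⟨i, by
          have : A i j = A i (g i) := by rw [hgs, hi]
          exact (hrow i this).symm⟩
      · rintro ⟨i, -, rfl⟩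
        exact ⟨i, hgs i⟩
    have hmem : ∀ j, s ∈ t j ↔ ¬ ∃ i, A i j = s := by
      intro j
      simp [ht]
    have h2 : (Finset.univ.filter (fun j => s ∈ t j))
        = (Finset.univ.filter (fun j => ¬ ∃ i, A i j = s)) := by
      apply Finset.filter_congr
      intro j _
      simp [hmem j]
    rw [h2, Finset.filter_not, Finset.card_sdiff_of_subset (Finset.filter_subset _ _), himg,
      Finset.card_image_of_injective _ hginj, Finset.card_univ]
    simp
  -- Hall condition
  have hall : ∀ S : Finset (Fin n), S.card ≤ (S.biUnion t).card := by
    intro S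
    have hcount : (S.sigma t).card = ∑ j ∈ S, (t j).card := Finset.card_sigma _ _
    have hsum : ∑ j ∈ S, (t j).card = S.card * (n - r) := by
      rw [Finset.sum_congr rfl (fun j _ => htcard j)]
      simp [mul_comm]
    have hfib : (S.sigma t).card
        = ∑ s ∈ S.biUnion t, ((S.sigma t).filter (fun p => p.2 = s)).card := by
      apply Finset.card_eq_sum_card_fiberwise
      intro p hp
      rw [Finset.mem_coe, Finset.mem_sigma] at hp
      exact Finset.mem_coe.mpr (Finset.mem_biUnion.mpr ⟨p.1, hp.1, hp.2⟩)
    have hfible : ∀ s : Fin n, ((S.sigma t).filter (fun p => p.2 = s)).card ≤ n - r := by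
      intro s
      rw [← hsym s]
      apply Finset.card_le_card_of_injOn (fun p => p.1)
      · intro p hp
        simp only [Finset.mem_coe, Finset.mem_filter, Finset.mem_sigma] at hp
        simp only [Finset.mem_coe, Finset.mem_filter, Finset.mem_univ, true_and]
        rw [← hp.2]
        exact hp.1.2
      · intro p hp q hq hpq
        simp only [Finset.coe_filter, Set.mem_setOf_eq, Finset.mem_sigma] at hp hq
        obtain ⟨p1, p2⟩ := p
        obtain ⟨q1, q2⟩ := q
        simp only at hpq hp hq
        obtain ⟨-, rfl⟩ := hp
        obtain ⟨-, hq2⟩ := hq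
        subst hq2
        subst hpq
        rfl
    have : S.card * (n - r) ≤ (S.biUnion t).card * (n - r) := by
      calc S.card * (n - r) = (S.sigma t).card := by rw [hcount, hsum]
        _ = _ := hfib
        _ ≤ ∑ s ∈ S.biUnion t, (n - r) := Finset.sum_le_sum (fun s _ => hfible s)
        _ = (S.biUnion t).card * (n - r) := by rw [Finset.sum_const, smul_eq_mul]
    have hpos : 0 < n - r := by omega
    exact Nat.le_of_mul_le_mul_right this hpos
  obtain ⟨f, hf, hft⟩ := (Finset.all_card_le_biUnion_card_iff_exists_injective t).mp hall
  refine ⟨f, hf, fun j i => ?_⟩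
  have := hft j
  simp only [ht, Finset.mem_sdiff, Finset.mem_univ, true_and, Finset.mem_image] at this
  intro h
  exact this ⟨i, h.symm⟩

lemma latin_extend_step (r n : ℕ) (hrn : r < n)
    (A : Fin r → Fin n → Fin n)
    (hrow : ∀ i, Function.Injective (A i))
    (hcol : ∀ j, Function.Injective (fun i : Fin r => A i j)) :
    ∃ B : Fin (r + 1) → Fin n → Fin n,
      (∀ i, Function.Injective (B i)) ∧
      (∀ j, Function.Injective (fun i : Fin (r + 1) => B i j)) ∧
      (∀ i j, B i.castSucc j = A i j) := by
  obtain ⟨f, hf, hfA⟩ := latin_exists_new_row r n hrn A hrow hcol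
  refine ⟨Fin.snoc A f, ?_, ?_, ?_⟩
  · intro i
    refine Fin.lastCases ?_ ?_ i
    · simpa using hf
    · intro i'; simpa using hrow i'
  · intro j i1 i2 h
    simp only at h
    rcases Fin.eq_castSucc_or_eq_last i1 with ⟨i1', rfl⟩ | rfl <;>
      rcases Fin.eq_castSucc_or_eq_last i2 with ⟨i2', rfl⟩ | rfl
    · rw [Fin.snoc_castSucc, Fin.snoc_castSucc] at h
      exact congrArg Fin.castSucc (hcol j h)
    · rw [Fin.snoc_castSucc, Fin.snoc_last] at h
      exact absurd h.symm (hfA j i1')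
    · rw [Fin.snoc_last, Fin.snoc_castSucc] at h
      exact absurd h (hfA j i2')
    · rfl
  · intro i j
    rw [Fin.snoc_castSucc]

lemma latin_extend_to (n : ℕ) : ∀ (k r : ℕ) (h : r + k = n)
    (A : Fin r → Fin n → Fin n),
    (∀ i, Function.Injective (A i)) →
    (∀ j, Function.Injective (fun i : Fin r => A i j)) →
    ∃ L : Fin n → Fin n → Fin n,
      (∀ i, Function.Injective (L i)) ∧
      (∀ j, Function.Injective (fun i : Fin n => L i j)) ∧
      (∀ (i : Fin r) (j : Fin n), L (Fin.castLE (by omega) i) j = A i j) := by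
  intro k
  induction k with
  | zero =>
    intro r h A hrow hcol
    have : r = n := by omega
    subst this
    exact ⟨A, hrow, hcol, fun i j => by congr 1⟩
  | succ k ih =>
    intro r h A hrow hcol
    have hrn : r < n := by omega
    obtain ⟨B, hBrow, hBcol, hBA⟩ := latin_extend_step r n hrn A hrow hcol
    obtain ⟨L, hLrow, hLcol, hLB⟩ := ih (r + 1) (by omega) B hBrow hBcol
    refine ⟨L, hLrow, hLcol, fun i j => ?_⟩
    have := hLB i.castSucc j
    rw [hBA] at this
    rw [← this]
    congr 1


/-- For all integers r, n with 1 ≤ r < n, every r×n Latin rectangle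
can be extended, by adjoining n−r further rows, to a Latin square of order n.

An r×n Latin rectangle is represented by `A : Fin r → Fin n → Fin n` whose rows are
injective (each of the n symbols occurs exactly once in each row of length n) and whose
columns are injective (each symbol occurs at most once in each column).  A Latin square
of order n is `L : Fin n → Fin n → Fin n` with all rows and all columns injective. -/
theorem latin_rectangle_extends_to_latin_square
    (r n : ℕ) (h1 : 1 ≤ r) (h2 : r < n)
    (A : Fin r → Fin n → Fin n)
    (hrow : ∀ i : Fin r, Function.Injective (A i))
    (hcol : ∀ j : Fin n, Function.Injective (fun i : Fin r => A i j)) :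
    ∃ L : Fin n → Fin n → Fin n,
      (∀ i : Fin n, Function.Injective (L i)) ∧
      (∀ j : Fin n, Function.Injective (fun i : Fin n => L i j)) ∧
      (∀ (i : Fin r) (j : Fin n), L (Fin.castLE h2.le i) j = A i j) := by
  exact latin_extend_to n (n - r) r (by omega) A hrow hcol
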